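/- arXiv:2401.01338 — 2 statements merged into one kernel-verified Lean document; each statement's English description precedes it below -/
import Mathlib

section
/- Let a, b be natural numbers, ε > 0 a real number, and λ : ℝ → ℝ a continuously differentiable function with λ'(t) ≤ 0 for all t and λ(0) = 1. Define g : ℝ^a × ℝ^b → ℝ by g(x,y) = ‖x‖² − ‖y‖² − (3ε/2)·λ(‖x‖²/ε). Then g is differentiable, its only critical point is the origin (0,0), and g(0,0) = −3ε/2. In particular, g has no critical points in the set g⁻¹([−5ε/4, 5ε/4]). -/
set_option synthInstance.maxHeartbeats 1000000
set_option maxHeartbeats 1000000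

theorem stmt_1_aux {E F : Type*} [NormedAddCommGroup E] [InnerProductSpace ℝ E]
    [NormedAddCommGroup F] [InnerProductSpace ℝ F]
    (ε : ℝ) (lam : ℝ → ℝ) (hlam_C1 : ContDiff ℝ 1 lam) (p : E × F) :
    HasFDerivAt (fun q : E × F => ‖q.1‖ ^ 2 - ‖q.2‖ ^ 2 - (3 * ε / 2) * lam (‖q.1‖ ^ 2 / ε))
      ((2 • (innerSL ℝ p.1).comp (ContinuousLinearMap.fst ℝ E F)
        - 2 • (innerSL ℝ p.2).comp (ContinuousLinearMap.snd ℝ E F))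
        - (3 * ε / 2) • ((deriv lam (‖p.1‖ ^ 2 / ε)) •
            (ε⁻¹ • (2 • (innerSL ℝ p.1).comp (ContinuousLinearMap.fst ℝ E F))))) p := by
  have h1 : HasFDerivAt (fun q : E × F => ‖q.1‖ ^ 2)
      (2 • (innerSL ℝ p.1).comp (ContinuousLinearMap.fst ℝ E F)) p :=
    (hasFDerivAt_fst).norm_sq
  have h2 : HasFDerivAt (fun q : E × F => ‖q.2‖ ^ 2)
      (2 • (innerSL ℝ p.2).comp (ContinuousLinearMap.snd ℝ E F)) p :=
    (hasFDerivAt_snd).norm_sq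
  have h3 := h1.mul_const ε⁻¹
  have hlamd : HasDerivAt lam (deriv lam (‖p.1‖ ^ 2 / ε)) (‖p.1‖ ^ 2 / ε) :=
    ((hlam_C1.differentiable one_ne_zero) _).hasDerivAt
  have h4 := hlamd.comp_hasFDerivAt p h3
  have h5 := (h4.const_mul (3 * ε / 2))
  simp only [div_eq_mul_inv]
  simp only [div_eq_mul_inv] at h5
  exact (h1.sub h2).sub h5

theorem stmt_1 (a b : ℕ) (ε : ℝ) (hε : 0 < ε) (lam : ℝ → ℝ)
    (hlam_C1 : ContDiff ℝ 1 lam) (hlam_deriv : ∀ t, deriv lam t ≤ 0)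
    (hlam_zero : lam 0 = 1)
    (g : EuclideanSpace ℝ (Fin a) × EuclideanSpace ℝ (Fin b) → ℝ)
    (hg : ∀ p, g p = ‖p.1‖ ^ 2 - ‖p.2‖ ^ 2 - (3 * ε / 2) * lam (‖p.1‖ ^ 2 / ε)) :
    Differentiable ℝ g ∧ (∀ p, fderiv ℝ g p = 0 ↔ p = 0) ∧
      g 0 = -(3 * ε / 2) ∧
      ∀ p, g p ∈ Set.Icc (-(5 * ε / 4)) (5 * ε / 4) → fderiv ℝ g p ≠ 0 := by
  have hg' : g = fun q : EuclideanSpace ℝ (Fin a) × EuclideanSpace ℝ (Fin b) =>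
      ‖q.1‖ ^ 2 - ‖q.2‖ ^ 2 - (3 * ε / 2) * lam (‖q.1‖ ^ 2 / ε) := funext hg
  subst hg'
  have hD := fun p : EuclideanSpace ℝ (Fin a) × EuclideanSpace ℝ (Fin b) =>
    stmt_1_aux ε lam hlam_C1 p
  have hdiff : Differentiable ℝ
      (fun q : EuclideanSpace ℝ (Fin a) × EuclideanSpace ℝ (Fin b) =>
        ‖q.1‖ ^ 2 - ‖q.2‖ ^ 2 - (3 * ε / 2) * lam (‖q.1‖ ^ 2 / ε)) :=
    fun p => (hD p).differentiableAt
  have hfd := fun p : EuclideanSpace ℝ (Fin a) × EuclideanSpace ℝ (Fin b) => (hD p).fderiv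
  have hcrit : ∀ p : EuclideanSpace ℝ (Fin a) × EuclideanSpace ℝ (Fin b),
      fderiv ℝ (fun q : EuclideanSpace ℝ (Fin a) × EuclideanSpace ℝ (Fin b) =>
        ‖q.1‖ ^ 2 - ‖q.2‖ ^ 2 - (3 * ε / 2) * lam (‖q.1‖ ^ 2 / ε)) p = 0 ↔ p = 0 := by
    intro p
    rw [hfd p]
    constructor
    · intro h
      have hy := congrArg (fun L => L ((0 : EuclideanSpace ℝ (Fin a)), p.2)) h
      simp only [ContinuousLinearMap.sub_apply, ContinuousLinearMap.smul_apply,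
        ContinuousLinearMap.comp_apply, ContinuousLinearMap.coe_fst',
        ContinuousLinearMap.coe_snd', innerSL_apply_apply, ContinuousLinearMap.zero_apply,
        smul_eq_mul, nsmul_eq_mul, Nat.cast_ofNat, inner_zero_right, real_inner_self_eq_norm_sq, mul_zero, sub_zero,
        zero_sub, neg_eq_zero] at hy
      have hx := congrArg (fun L => L (p.1, (0 : EuclideanSpace ℝ (Fin b)))) h
      simp only [ContinuousLinearMap.sub_apply, ContinuousLinearMap.smul_apply,
        ContinuousLinearMap.comp_apply, ContinuousLinearMap.coe_fst',
        ContinuousLinearMap.coe_snd', innerSL_apply_apply, ContinuousLinearMap.zero_apply,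
        smul_eq_mul, nsmul_eq_mul, Nat.cast_ofNat, inner_zero_right, real_inner_self_eq_norm_sq, mul_zero, sub_zero] at hx
      have hy0 : p.2 = 0 := by
        rw [← norm_eq_zero]
        nlinarith [norm_nonneg p.2, hy]
      have hld := hlam_deriv (‖p.1‖ ^ 2 / ε)
      have hεi : 0 < ε⁻¹ := inv_pos.mpr hε
      have hx0 : p.1 = 0 := by
        rw [← norm_eq_zero]
        nlinarith [norm_nonneg p.1, sq_nonneg ‖p.1‖,
          mul_nonneg (mul_nonneg (by positivity : (0:ℝ) ≤ 3 * ε / 2)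
            (neg_nonneg.mpr hld)) (mul_nonneg hεi.le
              (by positivity : (0:ℝ) ≤ 2 * ‖p.1‖ ^ 2))]
      exact Prod.ext hx0 hy0
    · rintro rfl
      refine ContinuousLinearMap.ext fun u => ?_
      simp
  refine ⟨hdiff, hcrit, by simp [hlam_zero], ?_⟩
  intro p hp h0
  have hp0 : p = 0 := (hcrit p).mp h0
  subst hp0
  simp [hlam_zero, Set.mem_Icc] at hp
  linarith [hp.1]
end

section
/- Let E be a finite-dimensional real inner product space, ω a nondegenerate alternating bilinear form on E, and A : E → E an invertible linear map which is skew-adjoint with respect to the inner product (⟨Av, w⟩ = −⟨v, Aw⟩) and infinitesimally symplectic (ω(Av, w) + ω(v, Aw) = 0 for all v, w). Then the bilinear form Q(v, w) = ω(Av, w) is symmetric and nondegenerate, and its negative index (the maximal dimension of a subspace on which Q is negative definite) is even. -/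
open Module Submodule Matrix

theorem stmt_7 (E : Type*) [NormedAddCommGroup E] [InnerProductSpace ℝ E]
    [FiniteDimensional ℝ E]
    (ω : E →ₗ[ℝ] E →ₗ[ℝ] ℝ)
    (hω_alt : ∀ v : E, ω v v = 0)
    (hω_nondeg : ∀ v : E, (∀ w : E, ω v w = 0) → v = 0)
    (A : E →ₗ[ℝ] E) (hA_bij : Function.Bijective A)
    (hA_skew : ∀ v w : E, (inner ℝ (A v) w : ℝ) = -(inner ℝ v (A w) : ℝ))
    (hA_symp : ∀ v w : E, ω (A v) w + ω v (A w) = 0)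
    (Q : E → E → ℝ) (hQ : ∀ v w, Q v w = ω (A v) w) :
    (∀ v w : E, Q v w = Q w v) ∧
    (∀ v : E, (∀ w : E, Q v w = 0) → v = 0) ∧
    Even (sSup {n : ℕ | ∃ W : Submodule ℝ E, Module.finrank ℝ W = n ∧
      ∀ v ∈ W, v ≠ 0 → Q v v < 0}) := by
  classical
  have hω_anti : ∀ v w : E, ω v w = - ω w v := by
    intro v w
    have h := hω_alt (v + w)
    simp only [map_add, LinearMap.add_apply, hω_alt] at h
    linarith
  have hQsymm : ∀ v w : E, Q v w = Q w v := by
    intro v w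
    rw [hQ, hQ]
    have h1 := hA_symp w v
    have h2 := hω_anti w (A v)
    linarith
  refine ⟨hQsymm, ?_, ?_⟩
  · intro v hv
    have hAv : A v = 0 := hω_nondeg _ (fun w => by rw [← hQ]; exact hv w)
    exact hA_bij.injective (by rw [hAv, map_zero] : A v = A 0)
  set n := Module.finrank ℝ E with hn
  have hnn : Module.finrank ℝ E = n := rfl
  let S : E →ₗ[ℝ] E :=
    (InnerProductSpace.toDual ℝ E).symm.toLinearEquiv.toLinearMap ∘ₗ
      (LinearMap.toContinuousLinearMap).toLinearMap ∘ₗ ω ∘ₗ A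
  have hS : ∀ v w : E, (inner ℝ (S v) w : ℝ) = ω (A v) w := by
    intro v w
    simp [S, InnerProductSpace.toDual_symm_apply]
  have hS_symm : LinearMap.IsSymmetric S := by
    intro v w
    rw [hS, real_inner_comm, hS, ← hQ, ← hQ, hQsymm]
  have hAS : ∀ v : E, S (A v) = A (S v) := by
    intro v
    apply ext_inner_right ℝ
    intro w
    rw [hS]
    have h1 := hA_symp (A v) w
    have h2 := hS v (A w)
    have h3 := hA_skew (S v) w
    have h4 := real_inner_comm (S v) (A w)
    have h5 := real_inner_comm (A (S v)) w
    linarith [hω_anti (A (A v)) w]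
  let b := hS_symm.eigenvectorBasis hnn
  let μ := hS_symm.eigenvalues hnn
  have hb : ∀ i, S (b i) = μ i • b i := fun i =>
    hS_symm.apply_eigenvectorBasis hnn i
  have hrepr : ∀ (v : E) i, b.repr v i = (inner ℝ (b i) v : ℝ) := fun v i =>
    b.repr_apply_apply v i
  have hSrepr : ∀ (v : E) i, b.repr (S v) i = μ i * b.repr v i := by
    intro v i
    rw [hrepr, hrepr, ← hS_symm (b i) v, hb, real_inner_smul_left]
  have hinner : ∀ v w : E, (inner ℝ v w : ℝ) = ∑ i, b.repr v i * b.repr w i := by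
    intro v w
    rw [← b.sum_inner_mul_inner v w]
    exact Finset.sum_congr rfl fun i _ => by
      rw [hrepr, hrepr, real_inner_comm (b i) v]
  have hQform : ∀ v : E, Q v v = ∑ i, μ i * (b.repr v i * b.repr v i) := by
    intro v
    rw [hQ, ← hS, hinner]
    exact Finset.sum_congr rfl fun i _ => by rw [hSrepr, mul_assoc]
  have hmem : ∀ (t : Set (Fin n)) (v : E),
      v ∈ span ℝ (⇑b '' t) ↔ ∀ i ∉ t, b.repr v i = 0 := by
    intro t v
    rw [← b.coe_toBasis, b.toBasis.mem_span_image]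
    constructor
    · intro h i hi
      by_contra h0
      exact hi (h (Finsupp.mem_support_iff.mpr (by rwa [b.coe_toBasis_repr_apply])))
    · intro h i hi
      by_contra hit
      exact (Finsupp.mem_support_iff.mp hi) (by rw [b.coe_toBasis_repr_apply]; exact h i hit)
  have hzero : ∀ v : E, (∀ i, b.repr v i = 0) → v = 0 := by
    intro v h
    rw [← b.sum_repr v]
    exact Finset.sum_eq_zero fun i _ => by rw [h i, zero_smul]
  set s : Set (Fin n) := {i | μ i < 0} with hs
  set Vneg := span ℝ (⇑b '' s) with hVneg
  set Vpos := span ℝ (⇑b '' sᶜ) with hVpos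
  have hVneg_negdef : ∀ v ∈ Vneg, v ≠ 0 → Q v v < 0 := by
    intro v hv hv0
    obtain ⟨i0, hi0⟩ : ∃ i, b.repr v i ≠ 0 := by
      by_contra h; push_neg at h; exact hv0 (hzero v h)
    have hi0s : μ i0 < 0 := by
      by_contra h
      exact hi0 ((hmem s v).mp hv i0 (by simpa [hs] using h))
    rw [hQform]
    have hlt : ∑ i, μ i * (b.repr v i * b.repr v i) < ∑ _i : Fin n, (0 : ℝ) := by
      apply Finset.sum_lt_sum
      · intro i _
        rcases lt_or_ge (μ i) 0 with h | h
        · nlinarith [mul_self_nonneg (b.repr v i)]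
        · rw [(hmem s v).mp hv i (by simpa [hs] using not_lt.mpr h)]
          simp
      · exact ⟨i0, Finset.mem_univ _,
          mul_neg_of_neg_of_pos hi0s (mul_self_pos.mpr hi0)⟩
    simpa using hlt
  have hVpos_nonneg : ∀ v ∈ Vpos, 0 ≤ Q v v := by
    intro v hv
    rw [hQform]
    apply Finset.sum_nonneg
    intro i _
    rcases lt_or_ge (μ i) 0 with h | h
    · rw [(hmem sᶜ v).mp hv i (by simpa [hs] using h)]
      simp
    · exact mul_nonneg h (mul_self_nonneg _)
  have hcard : ∀ t : Set (Fin n),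
      Module.finrank ℝ (span ℝ (⇑b '' t)) = t.toFinset.card := by
    intro t
    have hli : LinearIndependent ℝ (fun i : t => b i) := by
      have := b.toBasis.linearIndependent.comp ((↑) : t → Fin n) Subtype.val_injective
      rw [b.coe_toBasis] at this
      exact this
    rw [Set.image_eq_range, finrank_span_eq_card hli, Set.toFinset_card]
  have hdim_sum : Module.finrank ℝ Vneg + Module.finrank ℝ Vpos = n := by
    rw [hVneg, hVpos, hcard, hcard, Set.toFinset_compl, Finset.card_add_card_compl]
    simp
  -- A-invariance of Vneg
  have hABj : ∀ j i, μ i ≠ μ j → b.repr (A (b j)) i = 0 := by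
    intro j i hne
    have h1 : μ i * b.repr (A (b j)) i = μ j * b.repr (A (b j)) i := by
      have h2 : S (A (b j)) = μ j • A (b j) := by
        rw [hAS, hb, _root_.map_smul]
      have h3 := hSrepr (A (b j)) i
      rw [h2] at h3
      rw [← h3]
      simp [_root_.map_smul]
    have h4 : (μ i - μ j) * b.repr (A (b j)) i = 0 := by ring_nf; linarith
    exact (mul_eq_zero.mp h4).resolve_left (sub_ne_zero.mpr hne)
  have hAinv : ∀ v ∈ Vneg, A v ∈ Vneg := by
    intro v hv
    rw [hVneg, hmem]
    intro j hj
    have hj' : ¬ μ j < 0 := by simpa [hs] using hj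
    rw [hrepr]
    have h1 : (inner ℝ (A (b j)) v : ℝ) = 0 := by
      rw [hinner]
      apply Finset.sum_eq_zero
      intro i _
      rcases lt_or_ge (μ i) 0 with h | h
      · rw [hABj j i (ne_of_lt (lt_of_lt_of_le h (not_lt.mp hj')))]
        ring
      · rw [(hmem s v).mp hv i (by simpa [hs] using not_lt.mpr h)]
        ring
    have h2 := hA_skew (b j) v
    linarith
  -- evenness of finrank Vneg
  have heven : Even (Module.finrank ℝ Vneg) := by
    set m := Module.finrank ℝ Vneg with hm
    let A' : Vneg →ₗ[ℝ] Vneg := A.restrict hAinv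
    have hA'c : ∀ x : Vneg, (A' x : E) = A x := fun x =>
      A.restrict_coe_apply hAinv x
    let cb := stdOrthonormalBasis ℝ Vneg
    let M := LinearMap.toMatrix cb.toBasis cb.toBasis A'
    have hM : ∀ i j, M i j = (inner ℝ (cb i : Vneg) (A' (cb j)) : ℝ) := by
      intro i j
      show (LinearMap.toMatrix cb.toBasis cb.toBasis A') i j = _
      rw [LinearMap.toMatrix_apply]
      rw [cb.coe_toBasis_repr_apply, cb.repr_apply_apply, cb.coe_toBasis]
    have hskew' : ∀ x y : Vneg, (inner ℝ (A' x) y : ℝ) = -(inner ℝ x (A' y) : ℝ) := by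
      intro x y
      have := hA_skew (x : E) (y : E)
      simp only [Submodule.coe_inner, hA'c]
      exact this
    have hMT : Mᵀ = -M := by
      ext i j
      rw [Matrix.transpose_apply, Matrix.neg_apply, hM, hM, real_inner_comm]
      rw [hskew']
    have hA'inj : Function.Injective A' := by
      intro x y hxy
      exact Subtype.ext (hA_bij.injective (by
        rw [← hA'c, ← hA'c, hxy]))
    have hA'bij : Function.Bijective A' :=
      ⟨hA'inj, LinearMap.injective_iff_surjective.mp hA'inj⟩
    have hdet : M.det ≠ 0 := by
      have hu := LinearEquiv.isUnit_det (LinearEquiv.ofBijective A' hA'bij)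
        cb.toBasis cb.toBasis
      have : (LinearEquiv.ofBijective A' hA'bij : Vneg →ₗ[ℝ] Vneg) = A' := rfl
      rw [this] at hu
      exact hu.ne_zero
    by_contra hodd
    rw [Nat.not_even_iff_odd] at hodd
    have h1 : M.det = -M.det := by
      conv_lhs => rw [← Matrix.det_transpose M, hMT]
      rw [Matrix.det_neg]
      simp [← hm, hodd.neg_one_pow]
    exact hdet (by linarith)
  -- compute the sSup
  have hmemV : Module.finrank ℝ Vneg ∈ {k : ℕ | ∃ W : Submodule ℝ E,
      Module.finrank ℝ W = k ∧ ∀ v ∈ W, v ≠ 0 → Q v v < 0} :=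
    ⟨Vneg, rfl, hVneg_negdef⟩
  have hub : ∀ k ∈ {k : ℕ | ∃ W : Submodule ℝ E,
      Module.finrank ℝ W = k ∧ ∀ v ∈ W, v ≠ 0 → Q v v < 0},
      k ≤ Module.finrank ℝ Vneg := by
    rintro k ⟨W, rfl, hW⟩
    have hdisj : Disjoint W Vpos := by
      rw [Submodule.disjoint_def]
      intro x hxW hxP
      by_contra h0
      exact absurd (hVpos_nonneg x hxP) (not_le.mpr (hW x hxW h0))
    have hle := Submodule.finrank_add_finrank_le_of_disjoint hdisj
    omega
  have hsup : sSup {k : ℕ | ∃ W : Submodule ℝ E,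
      Module.finrank ℝ W = k ∧ ∀ v ∈ W, v ≠ 0 → Q v v < 0}
      = Module.finrank ℝ Vneg :=
    le_antisymm (csSup_le ⟨_, hmemV⟩ hub) (le_csSup ⟨_, hub⟩ hmemV)
  rw [hsup]
  exact heven
end
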